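/- Let K : [0,1] × [0,1] → [0,1] be a continuous map such that for every t ∈ [0,1] the intermediate path K(−,t) : [0,1] → [0,1] is a zigzag path. Then the length of K(−,t) is independent of t; in particular K(−,0) and K(−,1) are zigzag paths of the same length. (Step (c) of the proof of Theorem 1.7: the length of a controlled path of c𝕀∼ is invariant under hybrid 2-paths.) -/

import Mathlib

open Set

/-- A continuous map `b : [0,1] → [0,1]` is a *zigzag path of length `n`* (see Context). -/
def IsZigzag (b : ℝ → ℝ) (n : ℕ) : Prop :=
  ContinuousOn b (Icc 0 1) ∧ (∀ t ∈ Icc (0:ℝ) 1, b t ∈ Icc (0:ℝ) 1) ∧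
  ((n = 0 ∧ ∀ t ∈ Icc (0:ℝ) 1, b t = 0) ∨
   (1 ≤ n ∧ ∃ t : ℕ → ℝ, t 0 = 0 ∧ t n = 1 ∧
     (∀ i < n, t i < t (i + 1)) ∧
     (∀ i ≤ n, b (t i) = if Odd i then 1 else 0) ∧
     (∀ i, 1 ≤ i → i ≤ n →
       if Odd i then MonotoneOn b (Icc (t (i - 1)) (t i))
       else AntitoneOn b (Icc (t (i - 1)) (t i)))))

private lemma chain_mono {t : ℕ → ℝ} {n : ℕ} (hlt : ∀ i < n, t i < t (i + 1)) :
    ∀ i j, i ≤ j → j ≤ n → t i ≤ t j := by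
  intro i j hij hjn
  induction j with
  | zero => simp [Nat.le_zero.mp hij]
  | succ m ih =>
    rcases Nat.eq_or_lt_of_le hij with h | h
    · rw [h]
    · exact le_trans (ih (Nat.lt_succ_iff.mp h) (le_trans (Nat.le_succ m) hjn))
        (le_of_lt (hlt m (by omega)))

/-- Crossing-counting lemma: a zigzag path of length `n` admits at most `n` alternations
between values `≤ 1/4` and values `≥ 3/4`. -/
private lemma zigzag_cross {b : ℝ → ℝ} {n : ℕ} (hb : IsZigzag b n)
    (k : ℕ) (s : ℕ → ℝ) (hs : ∀ j ≤ k, s j ∈ Icc (0:ℝ) 1)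
    (hsm : ∀ j < k, s j < s (j + 1))
    (hstep : ∀ j < k, (b (s j) ≤ 1/4 ∧ 3/4 ≤ b (s (j + 1))) ∨
      (3/4 ≤ b (s j) ∧ b (s (j + 1)) ≤ 1/4)) :
    k ≤ n := by
  classical
  obtain ⟨hcont, hrange, hcases⟩ := hb
  rcases hcases with ⟨hn0, hz⟩ | ⟨hn1, t, ht0, htn, htlt, htv, htm⟩
  · -- constant zero path: no step possible
    rcases Nat.eq_zero_or_pos k with hk | hk
    · omega
    · exfalso
      have h0 := hstep 0 hk
      have h1 := hz (s 0) (hs 0 (by omega))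
      have h2 := hz (s 1) (hs 1 (by omega))
      rcases h0 with ⟨_, h⟩ | ⟨h, _⟩ <;> rw [h2] at * <;> rw [h1] at * <;> linarith
  · have tmono := chain_mono htlt
    have htIcc : ∀ i ≤ n, t i ∈ Icc (0:ℝ) 1 := by
      intro i hi
      constructor
      · rw [← ht0]; exact tmono 0 i (by omega) hi
      · rw [← htn]; exact tmono i n hi le_rfl
    -- continuity on subintervals
    have hcsub : ∀ i, 1 ≤ i → i ≤ n → ContinuousOn b (Icc (t (i-1)) (t i)) := by
      intro i h1 h2
      refine hcont.mono ?_
      intro y hy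
      exact ⟨le_trans (htIcc (i-1) (by omega)).1 hy.1, le_trans hy.2 (htIcc i h2).2⟩
    -- values at nodes
    have hval : ∀ i ≤ n, b (t i) = if Odd i then 1 else 0 := htv
    -- crossing points
    have hexx : ∀ i, 1 ≤ i → i ≤ n → ∃ x, x ∈ Icc (t (i-1)) (t i) ∧ b x = 1/2 := by
      intro i h1 h2
      have hle : t (i-1) ≤ t i := tmono (i-1) i (by omega) h2
      have hvim : b (t (i-1)) = if Odd (i-1) then 1 else 0 := hval (i-1) (by omega)
      have hvi : b (t i) = if Odd i then 1 else 0 := hval i h2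
      by_cases hodd : Odd i
      · have heven : ¬ Odd (i-1) := by
          rw [Nat.not_odd_iff_even]
          exact Nat.Odd.sub_odd hodd odd_one
        rw [if_neg heven] at hvim
        rw [if_pos hodd] at hvi
        have := intermediate_value_Icc hle (hcsub i h1 h2)
        rw [hvim, hvi] at this
        have hmem : (1/2 : ℝ) ∈ Icc (0:ℝ) 1 := by norm_num
        obtain ⟨x, hx1, hx2⟩ := this hmem
        exact ⟨x, hx1, hx2⟩
      · have hoddm : Odd (i-1) := by
          have : Even i := Nat.not_odd_iff_even.mp hodd
          exact Nat.Even.sub_odd h1 this odd_one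
        rw [if_pos hoddm] at hvim
        rw [if_neg hodd] at hvi
        have := intermediate_value_Icc' hle (hcsub i h1 h2)
        rw [hvim, hvi] at this
        have hmem : (1/2 : ℝ) ∈ Icc (0:ℝ) 1 := by norm_num
        obtain ⟨x, hx1, hx2⟩ := this hmem
        exact ⟨x, hx1, hx2⟩
    let x : ℕ → ℝ := fun i =>
      if h : 1 ≤ i ∧ i ≤ n then (hexx i h.1 h.2).choose else 0
    have hxmem : ∀ i, 1 ≤ i → i ≤ n → x i ∈ Icc (t (i-1)) (t i) := by
      intro i h1 h2
      simp only [x, dif_pos (And.intro h1 h2)]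
      exact (hexx i h1 h2).choose_spec.1
    have hxval : ∀ i, 1 ≤ i → i ≤ n → b (x i) = 1/2 := by
      intro i h1 h2
      simp only [x, dif_pos (And.intro h1 h2)]
      exact (hexx i h1 h2).choose_spec.2
    -- node values are not 1/2
    have hnode_ne : ∀ i ≤ n, b (t i) ≠ 1/2 := by
      intro i hi
      rw [hval i hi]
      by_cases h : Odd i <;> simp [h] <;> norm_num
    -- key: every step straddles a crossing point
    have key : ∀ u v, u ∈ Icc (0:ℝ) 1 → v ∈ Icc (0:ℝ) 1 → u < v →
        ((b u ≤ 1/4 ∧ 3/4 ≤ b v) ∨ (3/4 ≤ b u ∧ b v ≤ 1/4)) →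
        ∃ i, 1 ≤ i ∧ i ≤ n ∧ u < x i ∧ x i < v := by
      intro u v hu hv huv hst
      -- least i ≥ 1 with u ≤ t i
      have hP : ∃ i, 1 ≤ i ∧ u ≤ t i := ⟨n, hn1, htn ▸ hu.2⟩
      set i := Nat.find hP with hidef
      obtain ⟨hi1, hui⟩ := Nat.find_spec hP
      have hin : i ≤ n := Nat.find_min' hP ⟨hn1, htn ▸ hu.2⟩
      have hlow : t (i-1) ≤ u := by
        rcases Nat.eq_or_lt_of_le (show 1 ≤ i from hi1) with h | h
        · have h0 : i - 1 = 0 := by omega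
          rw [h0, ht0]; exact hu.1
        · by_contra hcon
          push_neg at hcon
          exact Nat.find_min hP (show i - 1 < i by omega) ⟨by omega, le_of_lt hcon⟩
      have humem : u ∈ Icc (t (i-1)) (t i) := ⟨hlow, hui⟩
      have hmono_i := htm i hi1 hin
      have hxi := hxmem i hi1 hin
      have hxvi := hxval i hi1 hin
      by_cases hvle : v ≤ t i
      · -- both in interval i
        have hvmem : v ∈ Icc (t (i-1)) (t i) := ⟨le_trans hlow (le_of_lt huv), hvle⟩
        by_cases hodd : Odd i
        · rw [if_pos hodd] at hmono_i
          -- must be an up-step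
          rcases hst with ⟨hu4, hv4⟩ | ⟨hu4, hv4⟩
          · refine ⟨i, hi1, hin, ?_, ?_⟩
            · by_contra hc; push_neg at hc
              have := hmono_i hxi humem hc
              rw [hxvi] at this; linarith
            · by_contra hc; push_neg at hc
              have := hmono_i hvmem hxi hc
              rw [hxvi] at this; linarith
          · exfalso
            have := hmono_i humem hvmem (le_of_lt huv)
            linarith
        · rw [if_neg hodd] at hmono_i
          rcases hst with ⟨hu4, hv4⟩ | ⟨hu4, hv4⟩
          · exfalso
            have := hmono_i humem hvmem (le_of_lt huv)
            linarith
          · refine ⟨i, hi1, hin, ?_, ?_⟩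
            · by_contra hc; push_neg at hc
              have := hmono_i hxi humem hc
              rw [hxvi] at this; linarith
            · by_contra hc; push_neg at hc
              have := hmono_i hvmem hxi hc
              rw [hxvi] at this; linarith
      · -- v beyond t i
        push_neg at hvle
        have hilt : i < n := by
          rcases Nat.eq_or_lt_of_le hin with h | h
          · exfalso; rw [h, htn] at hvle; exact absurd hv.2 (not_le.mpr hvle)
          · exact h
        have hxlt_ti : x i < t i := by
          rcases lt_or_eq_of_le hxi.2 with h | h
          · exact h
          · exfalso; exact hnode_ne i hin (h ▸ hxvi)
        -- x (i+1) facts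
        have hi1' : 1 ≤ i + 1 := by omega
        have hin' : i + 1 ≤ n := by omega
        have hxi' := hxmem (i+1) hi1' hin'
        have hxvi' := hxval (i+1) hi1' hin'
        simp only [Nat.add_sub_cancel] at hxi'
        have hxgt_ti : t i < x (i+1) := by
          rcases lt_or_eq_of_le hxi'.1 with h | h
          · exact h
          · exfalso; exact hnode_ne i hin (by rw [← h] at hxvi'; exact hxvi')
        have hmono_i1 := htm (i+1) hi1' hin'
        simp only [Nat.add_sub_cancel] at hmono_i1
        by_cases hodd : Odd i
        · rcases hst with ⟨hu4, hv4⟩ | ⟨hu4, hv4⟩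
          · -- up step, i odd: use x i
            rw [if_pos hodd] at hmono_i
            refine ⟨i, hi1, hin, ?_, lt_trans hxlt_ti hvle⟩
            by_contra hc; push_neg at hc
            have := hmono_i hxi humem hc
            rw [hxvi] at this; linarith
          · -- down step, i odd: use x (i+1), interval i+1 even (antitone)
            have hnodd : ¬ Odd (i+1) := by
              rw [Nat.not_odd_iff_even]; exact Odd.add_one hodd
            rw [if_neg hnodd] at hmono_i1
            refine ⟨i+1, hi1', hin', lt_of_le_of_lt hui hxgt_ti, ?_⟩
            by_contra hc; push_neg at hc
            have hvmem : v ∈ Icc (t i) (t (i+1)) := ⟨le_of_lt hvle, le_trans hc hxi'.2⟩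
            have := hmono_i1 hvmem hxi' hc
            rw [hxvi'] at this; linarith
        · rcases hst with ⟨hu4, hv4⟩ | ⟨hu4, hv4⟩
          · -- up step, i even: use x (i+1), interval i+1 odd (monotone)
            have hodd' : Odd (i+1) := Even.add_one (Nat.not_odd_iff_even.mp hodd)
            rw [if_pos hodd'] at hmono_i1
            refine ⟨i+1, hi1', hin', lt_of_le_of_lt hui hxgt_ti, ?_⟩
            by_contra hc; push_neg at hc
            have hvmem : v ∈ Icc (t i) (t (i+1)) := ⟨le_of_lt hvle, le_trans hc hxi'.2⟩
            have := hmono_i1 hvmem hxi' hc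
            rw [hxvi'] at this; linarith
          · -- down step, i even: use x i
            rw [if_neg hodd] at hmono_i
            refine ⟨i, hi1, hin, ?_, lt_trans hxlt_ti hvle⟩
            by_contra hc; push_neg at hc
            have := hmono_i hxi humem hc
            rw [hxvi] at this; linarith
    -- counting
    let Φ : ℕ → ℕ := fun j => ((Finset.Icc 1 n).filter (fun i => x i ≤ s j)).card
    have hΦstep : ∀ j < k, Φ j < Φ (j+1) := by
      intro j hj
      obtain ⟨i, hi1, hin, hxu, hxv⟩ := key (s j) (s (j+1)) (hs j (le_of_lt hj))
        (hs (j+1) hj) (hsm j hj) (hstep j hj)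
      apply Finset.card_lt_card
      constructor
      · intro a ha
        simp only [Finset.mem_filter, Finset.mem_Icc] at ha ⊢
        exact ⟨ha.1, le_trans ha.2 (le_of_lt (hsm j hj))⟩
      · intro hcon
        have hi_mem : i ∈ (Finset.Icc 1 n).filter (fun i => x i ≤ s (j+1)) := by
          simp only [Finset.mem_filter, Finset.mem_Icc]
          exact ⟨⟨hi1, hin⟩, le_of_lt hxv⟩
        have := hcon hi_mem
        simp only [Finset.mem_filter, Finset.mem_Icc] at this
        linarith [this.2]
    have hΦle : ∀ j ≤ k, j ≤ Φ j := by
      intro j hj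
      induction j with
      | zero => omega
      | succ m ih =>
        have := hΦstep m (by omega)
        have := ih (by omega)
        omega
    have hΦbound : Φ k ≤ n := by
      calc Φ k ≤ (Finset.Icc 1 n).card := Finset.card_filter_le _ _
        _ = n := by rw [Nat.card_Icc]; omega
    have := hΦle k le_rfl
    omega

/-- Two uniformly `1/4`-close zigzag paths have the same length (one inequality). -/
private lemma zigzag_close_le {f g : ℝ → ℝ} {m n : ℕ} (hf : IsZigzag f m) (hg : IsZigzag g n)
    (hclose : ∀ s ∈ Icc (0:ℝ) 1, |f s - g s| ≤ 1/4) : n ≤ m := by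
  obtain ⟨_, _, hcases⟩ := hg
  rcases hcases with ⟨hn0, _⟩ | ⟨hn1, t, ht0, htn, htlt, htv, _⟩
  · omega
  · have tmono := chain_mono htlt
    have htIcc : ∀ i ≤ n, t i ∈ Icc (0:ℝ) 1 := by
      intro i hi
      exact ⟨ht0 ▸ tmono 0 i (by omega) hi, htn ▸ tmono i n hi le_rfl⟩
    refine zigzag_cross hf n t htIcc (fun j hj => htlt j hj) ?_
    intro j hj
    have hv1 := htv j (le_of_lt hj)
    have hv2 := htv (j+1) hj
    have hc1 := hclose (t j) (htIcc j (le_of_lt hj))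
    have hc2 := hclose (t (j+1)) (htIcc (j+1) hj)
    by_cases hodd : Odd j
    · right
      have hnodd : ¬ Odd (j+1) := by rw [Nat.not_odd_iff_even]; exact Odd.add_one hodd
      rw [if_pos hodd] at hv1
      rw [if_neg hnodd] at hv2
      rw [hv1] at hc1; rw [hv2] at hc2
      constructor
      · cases abs_le.mp hc1 with | intro h1 h2 => linarith
      · cases abs_le.mp hc2 with | intro h1 h2 => linarith
    · left
      have hodd' : Odd (j+1) := Even.add_one (Nat.not_odd_iff_even.mp hodd)
      rw [if_neg hodd] at hv1
      rw [if_pos hodd'] at hv2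
      rw [hv1] at hc1; rw [hv2] at hc2
      constructor
      · cases abs_le.mp hc1 with | intro h1 h2 => linarith
      · cases abs_le.mp hc2 with | intro h1 h2 => linarith

private lemma zigzag_close_eq {f g : ℝ → ℝ} {m n : ℕ} (hf : IsZigzag f m) (hg : IsZigzag g n)
    (hclose : ∀ s ∈ Icc (0:ℝ) 1, |f s - g s| ≤ 1/4) : m = n :=
  le_antisymm
    (zigzag_close_le hg hf (fun s hs => by rw [abs_sub_comm]; exact hclose s hs))
    (zigzag_close_le hf hg hclose)

/-- If `K : [0,1] × [0,1] → [0,1]` is continuous and each intermediate path `K (-, t)` is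
a zigzag path, then all the intermediate paths have the same length; in particular
`K (-, 0)` and `K (-, 1)` are zigzag paths of the same length.
(Step (c) of the proof of Theorem 1.7.) -/
theorem zigzag_length_const_of_homotopy (K : ℝ → ℝ → ℝ)
    (hK : ContinuousOn (fun p : ℝ × ℝ => K p.1 p.2) (Icc 0 1 ×ˢ Icc 0 1))
    (hzig : ∀ t ∈ Icc (0:ℝ) 1, ∃ m, IsZigzag (fun s => K s t) m) :
    ∃ n, ∀ t ∈ Icc (0:ℝ) 1, IsZigzag (fun s => K s t) n := by
  classical
  choose! ℓ hℓ using hzig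
  -- uniform continuity
  have hcomp : IsCompact (Icc (0:ℝ) 1 ×ˢ Icc (0:ℝ) 1) := isCompact_Icc.prod isCompact_Icc
  have hUC := hcomp.uniformContinuousOn_of_continuous hK
  rw [Metric.uniformContinuousOn_iff] at hUC
  obtain ⟨δ, hδpos, hδ⟩ := hUC (1/4) (by norm_num)
  -- nearby parameters give equal lengths
  have key : ∀ t ∈ Icc (0:ℝ) 1, ∀ t' ∈ Icc (0:ℝ) 1, dist t t' < δ → ℓ t = ℓ t' := by
    intro t ht t' ht' hd
    refine zigzag_close_eq (hℓ t ht) (hℓ t' ht') ?_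
    intro s hs
    have := hδ (s, t) (by exact ⟨hs, ht⟩) (s, t') (by exact ⟨hs, ht'⟩) ?_
    · rw [← Real.dist_eq]; exact le_of_lt this
    · rw [Prod.dist_eq, dist_self, max_eq_right dist_nonneg]
      exact hd
  -- grid argument
  obtain ⟨N, hN⟩ := exists_nat_one_div_lt hδpos
  set M : ℕ := N + 1 with hM
  have hMpos : (0:ℝ) < M := by positivity
  have hgrid : ∀ j ≤ M, (j : ℝ) / M ∈ Icc (0:ℝ) 1 := by
    intro j hj
    constructor
    · positivity
    · rw [div_le_one hMpos]
      exact_mod_cast hj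
  have hstep : ∀ j < M, ℓ ((j : ℝ) / M) = ℓ (((j:ℕ)+1 : ℝ) / M) := by
    intro j hj
    apply key _ (hgrid j (le_of_lt hj)) _ (by exact_mod_cast hgrid (j+1) hj)
    rw [Real.dist_eq]
    have : |(j:ℝ)/M - ((j:ℕ)+1:ℝ)/M| = 1/M := by
      rw [div_sub_div_same, abs_div, abs_of_pos hMpos]
      norm_num
    rw [this]
    exact_mod_cast hN
  have hconst : ∀ j ≤ M, ℓ ((j : ℝ) / M) = ℓ 0 := by
    intro j hj
    induction j with
    | zero => norm_num
    | succ m ih =>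
      have h1 := hstep m (by omega)
      have h2 := ih (by omega)
      have hc : ((m:ℝ)+1) = ((m+1 : ℕ) : ℝ) := by push_cast; ring
      rw [hc] at h1
      rw [← h1]; exact h2
  refine ⟨ℓ 0, ?_⟩
  intro u hu
  -- find grid point near u
  set j : ℕ := ⌊u * M⌋.toNat with hj
  have huM : 0 ≤ u * M := mul_nonneg hu.1 (le_of_lt hMpos)
  have hjval : (j : ℝ) = ⌊u * M⌋ := by
    rw [hj]
    exact_mod_cast Int.toNat_of_nonneg (Int.floor_nonneg.mpr huM)
  have hjle : j ≤ M := by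
    have : (⌊u * M⌋ : ℝ) ≤ u * M := Int.floor_le _
    have h2 : u * M ≤ M := by
      have := hu.2
      nlinarith
    have : (j : ℝ) ≤ M := by rw [hjval]; linarith
    exact_mod_cast this
  have hdist : dist u ((j:ℝ)/M) < δ := by
    rw [Real.dist_eq]
    have h1 : (j : ℝ) / M ≤ u := by
      rw [div_le_iff₀ hMpos, hjval]
      exact Int.floor_le _
    have h2 : u - (j:ℝ)/M < 1/M := by
      rw [sub_lt_iff_lt_add, ← add_div, lt_div_iff₀ hMpos]
      have : u * M < ⌊u * M⌋ + 1 := Int.lt_floor_add_one _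
      rw [← hjval] at this
      linarith [this]
    have h3 : (1:ℝ)/M < δ := by exact_mod_cast hN
    rw [abs_of_nonneg (by linarith)]
    linarith
  have : ℓ u = ℓ ((j:ℝ)/M) := key u hu _ (hgrid j hjle) hdist
  rw [← hconst j hjle, ← this]
  exact hℓ u hu
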